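/- Let x₁,…,xₙ be real numbers, G₁,…,Gₙ be independent standard Gumbel random variables (distribution function F(g) = exp(−exp(−g))), and kᵢ = xᵢ + Gᵢ. Then P(argmaxᵢ kᵢ = j) = exp(xⱼ) / ∑ᵢ exp(xᵢ) for each j. -/

import Mathlib

open MeasureTheory ProbabilityTheory
open scoped MeasureTheory ProbabilityTheory

section GumbelAux
open Real Set Filter Topology

lemma gumbel_bound (S t : ℝ) (hS : 0 < S) :
    S * rexp (-t) * rexp (-(S * rexp (-t))) ≤ (4 / S) * rexp t := by
  set u := rexp (-t) with hu
  have hu0 : 0 < u := exp_pos _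
  have hSu : 0 < S * u := by positivity
  have hexp : (S * u / 2) ^ 2 ≤ rexp (S * u) := by
    have h1 : S * u / 2 + 1 ≤ rexp (S * u / 2) := by
      have := Real.add_one_le_exp (S * u / 2); linarith
    calc (S * u / 2) ^ 2 ≤ (rexp (S * u / 2)) ^ 2 := by
          apply pow_le_pow_left₀ (by positivity) (by nlinarith) 2
      _ = rexp (S * u) := by
          rw [← Real.exp_nat_mul]; norm_num; ring_nf
  have hinv : rexp (-(S * u)) ≤ 4 / (S * u) ^ 2 := by
    rw [Real.exp_neg, inv_le_iff_one_le_mul₀ (exp_pos _)]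
    rw [div_mul_eq_mul_div, le_div_iff₀ (by positivity)]
    nlinarith
  have key : S * u * rexp (-(S * u)) ≤ 4 / (S * u) := by
    calc S * u * rexp (-(S * u)) ≤ S * u * (4 / (S * u) ^ 2) := by
          exact mul_le_mul_of_nonneg_left hinv (le_of_lt hSu)
      _ = 4 / (S * u) := by field_simp
  have h2 : 4 / (S * u) = (4 / S) * rexp t := by
    rw [hu, Real.exp_neg]; field_simp
  linarith [key, h2.le]

lemma gumbel_integrableOn (S a : ℝ) (hS : 0 < S) :
    IntegrableOn (fun t => S * rexp (-t) * rexp (-(S * rexp (-t)))) (Iic a) := by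
  apply Integrable.mono' (((integrableOn_exp_Iic a).const_mul (4 / S)))
  · apply Continuous.aestronglyMeasurable; continuity
  · filter_upwards with t
    rw [norm_of_nonneg (by positivity)]
    exact gumbel_bound S t hS

lemma gumbel_hasDerivAt (S t : ℝ) :
    HasDerivAt (fun t => rexp (-(S * rexp (-t))))
      (S * rexp (-t) * rexp (-(S * rexp (-t)))) t := by
  have h1 : HasDerivAt (fun t : ℝ => -(S * rexp (-t))) (S * rexp (-t)) t := by
    have := ((Real.hasDerivAt_exp (-t)).comp t (hasDerivAt_neg t)).const_mul S
    simpa using this.fun_neg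
  have := (Real.hasDerivAt_exp (-(S * rexp (-t)))).comp t h1
  exact this.congr_deriv (by ring)

lemma gumbel_tendsto_atBot (S : ℝ) (hS : 0 < S) :
    Tendsto (fun t => rexp (-(S * rexp (-t)))) atBot (𝓝 0) := by
  apply Real.tendsto_exp_atBot.comp
  have h1 : Tendsto (fun t : ℝ => rexp (-t)) atBot atTop :=
    Real.tendsto_exp_atTop.comp tendsto_neg_atBot_atTop
  have := h1.const_mul_atTop hS
  exact tendsto_neg_atTop_atBot.comp this

lemma gumbel_integral (S a : ℝ) (hS : 0 < S) :
    ∫ t in Iic a, S * rexp (-t) * rexp (-(S * rexp (-t))) = rexp (-(S * rexp (-a))) := by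
  have := integral_Iic_of_hasDerivAt_of_tendsto' (a := a)
    (fun t _ => gumbel_hasDerivAt S t) (gumbel_integrableOn S a hS)
    (gumbel_tendsto_atBot S hS)
  simpa using this

lemma gumbel_lintegral_Iic (S a : ℝ) (hS : 0 < S) :
    ∫⁻ t in Iic a, ENNReal.ofReal (S * rexp (-t) * rexp (-(S * rexp (-t)))) =
      ENNReal.ofReal (rexp (-(S * rexp (-a)))) := by
  rw [← ofReal_integral_eq_lintegral_ofReal (gumbel_integrableOn S a hS)
    (Filter.Eventually.of_forall fun t => by positivity), gumbel_integral S a hS]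

noncomputable def gM (S : ℝ) : Measure ℝ :=
  volume.withDensity (fun t => ENNReal.ofReal (S * rexp (-t) * rexp (-(S * rexp (-t)))))

lemma gM_meas_density (S : ℝ) :
    Measurable (fun t => ENNReal.ofReal (S * rexp (-t) * rexp (-(S * rexp (-t))))) := by
  exact ENNReal.measurable_ofReal.comp (by fun_prop)

lemma gM_Iic (S a : ℝ) (hS : 0 < S) :
    gM S (Iic a) = ENNReal.ofReal (rexp (-(S * rexp (-a)))) := by
  rw [gM, withDensity_apply _ measurableSet_Iic, gumbel_lintegral_Iic S a hS]

lemma gM_univ (S : ℝ) (hS : 0 < S) : gM S univ = 1 := by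
  have h1 : Tendsto (fun a : ℝ => gM S (Iic a)) atTop (𝓝 (gM S univ)) :=
    tendsto_measure_Iic_atTop _
  have h2 : Tendsto (fun a : ℝ => gM S (Iic a)) atTop (𝓝 1) := by
    simp_rw [fun a => gM_Iic S a hS]
    have h3 : Tendsto (fun a : ℝ => rexp (-(S * rexp (-a)))) atTop (𝓝 1) := by
      rw [show (1 : ℝ) = rexp (-(S * 0)) by simp]
      apply (Real.continuous_exp.tendsto _).comp
      apply Filter.Tendsto.neg
      apply Filter.Tendsto.const_mul
      exact Real.tendsto_exp_atBot.comp tendsto_neg_atTop_atBot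
    have := (ENNReal.continuous_ofReal.tendsto _).comp h3
    simpa [Function.comp_def] using this
  exact tendsto_nhds_unique h1 h2

lemma gM_prob (S : ℝ) (hS : 0 < S) : IsProbabilityMeasure (gM S) := ⟨gM_univ S hS⟩

instance : IsProbabilityMeasure (gM 1) := gM_prob 1 one_pos

lemma gM_Iio (S a : ℝ) (hS : 0 < S) :
    gM S (Iio a) = ENNReal.ofReal (rexp (-(S * rexp (-a)))) := by
  have hsing : gM S {a} = 0 := by
    rw [gM, withDensity_apply _ (measurableSet_singleton a)]
    rw [Measure.restrict_singleton]; simp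
  have h1 : gM S (Iic a) ≤ gM S (Iio a) + gM S {a} := by
    have : Iic a = Iio a ∪ {a} := by ext y; simp [le_iff_lt_or_eq]
    rw [this]; exact measure_union_le _ _
  have h2 : gM S (Iio a) ≤ gM S (Iic a) := measure_mono Iio_subset_Iic_self
  rw [← gM_Iic S a hS]
  rw [hsing, add_zero] at h1
  exact le_antisymm h2 h1

lemma gM_main_lintegral (A : ℝ) (hA : 0 ≤ A) :
    ∫⁻ t, ENNReal.ofReal (rexp (-(A * rexp (-t)))) ∂(gM 1) =
      ENNReal.ofReal (1 / (1 + A)) := by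
  have hS : (0:ℝ) < 1 + A := by linarith
  rw [gM, lintegral_withDensity_eq_lintegral_mul _ (gM_meas_density 1)
    (Measurable.ennreal_ofReal (by fun_prop))]
  have hpt : ∀ t : ℝ,
      (ENNReal.ofReal (1 * rexp (-t) * rexp (-(1 * rexp (-t)))) *
        ENNReal.ofReal (rexp (-(A * rexp (-t))))) =
      ENNReal.ofReal (1 / (1 + A)) *
        ENNReal.ofReal ((1 + A) * rexp (-t) * rexp (-((1 + A) * rexp (-t)))) := by
    intro t
    rw [← ENNReal.ofReal_mul (by positivity), ← ENNReal.ofReal_mul (by positivity)]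
    congr 1
    have h1 : rexp (-(1 * rexp (-t))) * rexp (-(A * rexp (-t))) =
        rexp (-((1 + A) * rexp (-t))) := by
      rw [← Real.exp_add]; ring_nf
    calc 1 * rexp (-t) * rexp (-(1 * rexp (-t))) * rexp (-(A * rexp (-t)))
        = rexp (-t) * (rexp (-(1 * rexp (-t))) * rexp (-(A * rexp (-t)))) := by ring
      _ = rexp (-t) * rexp (-((1 + A) * rexp (-t))) := by rw [h1]
      _ = 1 / (1 + A) * ((1 + A) * rexp (-t) * rexp (-((1 + A) * rexp (-t)))) := by
          field_simp
  simp_rw [Pi.mul_apply, hpt]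
  rw [lintegral_const_mul _ (Measurable.ennreal_ofReal (by fun_prop))]
  have htot : ∫⁻ t, ENNReal.ofReal ((1 + A) * rexp (-t) * rexp (-((1 + A) * rexp (-t)))) = 1 := by
    have := gM_univ (1 + A) hS
    rw [gM, withDensity_apply _ MeasurableSet.univ, Measure.restrict_univ] at this
    exact this
  rw [htot, mul_one]

open ProbabilityTheory

section Main
variable {Ω : Type*} [MeasureSpace Ω] [IsProbabilityMeasure (ℙ : Measure Ω)]

lemma marginal_eq {n : ℕ} (Gb : Fin n → Ω → ℝ) (hmeas : ∀ i, Measurable (Gb i))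
    (hcdf : ∀ i t, ℙ {ω | Gb i ω ≤ t} = ENNReal.ofReal (Real.exp (-Real.exp (-t))))
    (i : Fin n) : Measure.map (Gb i) ℙ = gM 1 := by
  have : IsProbabilityMeasure (Measure.map (Gb i) ℙ) :=
    Measure.isProbabilityMeasure_map (hmeas i).aemeasurable
  refine MeasureTheory.Measure.ext_of_Iic _ _ (fun a => ?_)
  rw [Measure.map_apply (hmeas i) measurableSet_Iic, gM_Iic 1 a one_pos]
  have : Gb i ⁻¹' Iic a = {ω | Gb i ω ≤ a} := rfl
  rw [this, hcdf i a, one_mul]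

lemma joint_eq {n : ℕ} (Gb : Fin n → Ω → ℝ) (hmeas : ∀ i, Measurable (Gb i))
    (hindep : iIndepFun Gb ℙ)
    (hcdf : ∀ i t, ℙ {ω | Gb i ω ≤ t} = ENNReal.ofReal (Real.exp (-Real.exp (-t)))) :
    Measure.map (fun ω i => Gb i ω) ℙ = Measure.pi (fun _ : Fin n => gM 1) := by
  have htup : Measurable (fun ω i => Gb i ω) :=
    measurable_pi_lambda _ hmeas
  refine (Measure.pi_eq fun s hs => ?_).symm
  rw [Measure.map_apply htup (MeasurableSet.univ_pi hs)]
  have hpre : (fun ω i => Gb i ω) ⁻¹' univ.pi s = ⋂ i ∈ Finset.univ, Gb i ⁻¹' s i := by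
    ext ω; simp [Set.mem_pi]
  rw [hpre, (iIndepFun_iff_measure_inter_preimage_eq_mul.mp hindep) Finset.univ
    (fun i _ => hs i)]
  refine Finset.prod_congr rfl (fun i _ => ?_)
  rw [← Measure.map_apply (hmeas i) (hs i), marginal_eq Gb hmeas hcdf i]
end Main

end GumbelAux

section GumbelAux2
open Real Set Filter Topology

theorem gumbel_max_trick (n : ℕ) (hn : 1 ≤ n) {Ω : Type*} [MeasureSpace Ω]
    [IsProbabilityMeasure (ℙ : Measure Ω)]
    (x : Fin n → ℝ) (Gb : Fin n → Ω → ℝ)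
    (hmeas : ∀ i, Measurable (Gb i))
    (hindep : iIndepFun Gb ℙ)
    (hcdf : ∀ i t, ℙ {ω | Gb i ω ≤ t} = ENNReal.ofReal (Real.exp (-Real.exp (-t))))
    (j : Fin n) :
    ℙ {ω | ∀ i, i ≠ j → x i + Gb i ω < x j + Gb j ω} =
      ENNReal.ofReal (Real.exp (x j) / ∑ i, Real.exp (x i)) := by
  classical
  obtain ⟨m, rfl⟩ : ∃ m, n = m + 1 := ⟨n - 1, (Nat.succ_pred_eq_of_pos hn).symm⟩
  set T : Set (Fin (m+1) → ℝ) := {g | ∀ i, i ≠ j → x i + g i < x j + g j} with hT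
  have hTmeas : MeasurableSet T := by
    have : T = ⋂ i, ⋂ (_ : i ≠ j), {g : Fin (m+1) → ℝ | x i + g i < x j + g j} := by
      ext g; simp [hT]
    rw [this]
    exact MeasurableSet.iInter fun i => MeasurableSet.iInter fun _ =>
      measurableSet_lt (by fun_prop) (by fun_prop)
  have htup : Measurable (fun ω i => Gb i ω) := measurable_pi_lambda _ hmeas
  have hev : {ω | ∀ i, i ≠ j → x i + Gb i ω < x j + Gb j ω} = (fun ω i => Gb i ω) ⁻¹' T := rfl
  rw [hev, ← Measure.map_apply htup hTmeas, joint_eq Gb hmeas hindep hcdf]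
  -- split off coordinate j
  have hmp := measurePreserving_piFinSuccAbove (fun _ : Fin (m+1) => gM 1) j
  set e := MeasurableEquiv.piFinSuccAbove (fun _ : Fin (m+1) => ℝ) j with he
  set S' : Set (ℝ × (Fin m → ℝ)) := e.symm ⁻¹' T with hS'def
  have hS' : MeasurableSet S' := e.symm.measurable hTmeas
  have hTe : T = e ⁻¹' S' := by
    ext g; simp [hS'def]
  rw [hTe, hmp.measure_preimage hS'.nullMeasurableSet, Measure.prod_apply hS']
  set A : ℝ := ∑ k : Fin m, rexp (x (j.succAbove k) - x j) with hA
  have hA0 : 0 ≤ A := Finset.sum_nonneg fun _ _ => (exp_pos _).le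
  have hslice : ∀ t : ℝ, (Measure.pi fun _ : Fin m => gM 1) (Prod.mk t ⁻¹' S') =
      ENNReal.ofReal (rexp (-(A * rexp (-t)))) := by
    intro t
    have hset : Prod.mk t ⁻¹' S' =
        univ.pi (fun k : Fin m => Iio (x j + t - x (j.succAbove k))) := by
      ext h
      simp only [hS'def, mem_preimage, Set.mem_pi, mem_univ, forall_true_left, mem_Iio]
      have hesymm : e.symm (t, h) = j.insertNth t h := rfl
      rw [hesymm]
      constructor
      · intro H k
        have := H (j.succAbove k) (Fin.succAbove_ne j k)
        rw [Fin.insertNth_apply_succAbove, Fin.insertNth_apply_same] at this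
        linarith
      · intro H i hi
        obtain ⟨k, rfl⟩ := Fin.exists_succAbove_eq hi
        rw [Fin.insertNth_apply_succAbove, Fin.insertNth_apply_same]
        have := H k
        linarith
    rw [hset, Measure.pi_pi]
    have h1 : ∀ k : Fin m, gM 1 (Iio (x j + t - x (j.succAbove k))) =
        ENNReal.ofReal (rexp (-(rexp (x (j.succAbove k) - x j) * rexp (-t)))) := by
      intro k
      rw [gM_Iio 1 _ one_pos]
      congr 2
      rw [one_mul, ← Real.exp_add]
      ring_nf
    simp_rw [h1]
    rw [← ENNReal.ofReal_prod_of_nonneg (fun _ _ => (exp_pos _).le)]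
    congr 1
    rw [← Real.exp_sum]
    congr 1
    rw [hA, Finset.sum_mul, ← Finset.sum_neg_distrib]
  simp_rw [hslice]
  rw [gM_main_lintegral A hA0]
  congr 1
  have hsum : (1 : ℝ) + A = (∑ i, rexp (x i)) / rexp (x j) := by
    have h2 := Fin.sum_univ_succAbove (fun i => rexp (x i - x j)) j
    rw [sub_self, Real.exp_zero] at h2
    rw [hA, ← h2]
    rw [Finset.sum_div]
    congr 1; ext i
    rw [Real.exp_sub]
  rw [hsum]
  have hpos : (0:ℝ) < ∑ i, rexp (x i) :=
    Finset.sum_pos (fun _ _ => exp_pos _) Finset.univ_nonempty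
  rw [one_div_div]

end GumbelAux2
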